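/- Let h be a torsion-free FDH function of rank ρ with trivial WHN filtration (t takes exactly two values), with h(n) = ρ(n-ν)+β for n ≫ 0, 0 ≤ β < ρ, and let h^i = min(γ^i, (h - Σ_{k<i} γ^k)_+) be as in the canonical rank-one decomposition. Then each h^i is a torsion-free FDH function of rank 1; its degree is -ν for 1 ≤ i ≤ β and -ν-1 for β+1 ≤ i ≤ ρ. -/

import Mathlib

open Finset

/-- First difference `r(n) = h(n) - h(n-1)`. -/
def dr (h : ℤ → ℤ) (n : ℤ) : ℤ := h n - h (n - 1)

/-- An FDH function: nonnegative, nondecreasing first differences nonnegative,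
vanishing for `n ≪ 0`, eventually linear `ρ n + σ` with `ρ ≥ 0`. -/
def IsFDH (h : ℤ → ℤ) : Prop :=
  (∀ n, 0 ≤ h n) ∧ (∀ n, 0 ≤ dr h n) ∧ (∃ N : ℤ, ∀ n ≤ N, h n = 0) ∧
  (∃ ρ σ : ℤ, 0 ≤ ρ ∧ ∃ N : ℤ, ∀ n ≥ N, h n = ρ * n + σ)

/-- Torsion-free: `r(m) ≥ 1` implies `r(n) ≥ 1` for all `n ≥ m`. -/
def TorsionFree (h : ℤ → ℤ) : Prop := ∀ m n : ℤ, m ≤ n → 1 ≤ dr h m → 1 ≤ dr h n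

/-- `ht` is the function `h̃(n) = max_{m ≥ n} (h(m) + (n-m) r(m))`. -/
def TildeSpec (h ht : ℤ → ℤ) : Prop :=
  ∀ n : ℤ, IsGreatest {v : ℤ | ∃ m : ℤ, n ≤ m ∧ v = h m + (n - m) * dr h m} (ht n)

/-- `t n` is the largest maximizer of `m ↦ h(m) + (n-m) r(m)` over `m ≥ n`,
equal to `⊤` when the set of maximizers is unbounded. -/
def TSpec (h ht : ℤ → ℤ) (t : ℤ → WithTop ℤ) : Prop :=
  ∀ n : ℤ,
    (∀ m : ℤ, n ≤ m → ht n = h m + (n - m) * dr h m → (m : WithTop ℤ) ≤ t n) ∧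
    (∀ τ : ℤ, t n = (τ : WithTop ℤ) → n ≤ τ ∧ ht n = h τ + (n - τ) * dr h τ) ∧
    (t n = ⊤ → ∀ M : ℤ, ∃ m : ℤ, M ≤ m ∧ n ≤ m ∧ ht n = h m + (n - m) * dr h m)

/-- The function gamma^i of the canonical rank-one decomposition. -/
def gam (ν β i n : ℤ) : ℤ := if i ≤ β then max (n - ν + 1) 0 else max (n - ν) 0

/-- The rank-one piece h^i = min(gamma^i, (h - sum_{k<i} gamma^k)_+). -/
noncomputable def rkOnePiece (h : ℤ → ℤ) (ν β i n : ℤ) : ℤ :=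
  min (gam ν β i n) (max (h n - ∑ k ∈ Finset.Icc 1 (i - 1), gam ν β k n) 0)

/-- t takes exactly two distinct values. -/
def TwoValues (t : ℤ → WithTop ℤ) : Prop :=
  ∃ v w : WithTop ℤ, v ≠ w ∧ (∃ n : ℤ, t n = v) ∧ (∃ n : ℤ, t n = w) ∧
    ∀ n : ℤ, t n = v ∨ t n = w

lemma mono_of_dr (h : ℤ → ℤ) (hr : ∀ n, 0 ≤ dr h n) :
    ∀ m n : ℤ, m ≤ n → h m ≤ h n := by
  intro m n hmn
  obtain ⟨k, rfl⟩ : ∃ k : ℕ, n = m + k := ⟨(n - m).toNat, by omega⟩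
  clear hmn
  induction k with
  | zero => simp
  | succ k ih =>
    have := hr (m + (k + 1 : ℕ))
    unfold dr at this
    have e : (m + (k + 1 : ℕ)) - 1 = m + (k : ℕ) := by push_cast; ring
    rw [e] at this
    omega

lemma jump_of_lt (h : ℤ → ℤ) :
    ∀ a b : ℤ, a ≤ b → h a < h b → ∃ m, a < m ∧ m ≤ b ∧ 1 ≤ dr h m := by
  intro a b hab
  obtain ⟨k, rfl⟩ : ∃ k : ℕ, b = a + k := ⟨(b - a).toNat, by omega⟩
  clear hab
  induction k with
  | zero => simp
  | succ k ih =>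
    intro hlt
    by_cases hc : h a < h (a + (k : ℕ))
    · obtain ⟨m, h1, h2, h3⟩ := ih hc
      exact ⟨m, h1, by omega, h3⟩
    · refine ⟨a + (k + 1 : ℕ), by push_cast; omega, le_refl _, ?_⟩
      unfold dr
      have e : (a + (k + 1 : ℕ)) - 1 = a + (k : ℕ) := by push_cast; ring
      rw [e]
      push_cast at hlt ⊢
      omega

lemma gam_nonneg (ν β i n : ℤ) : 0 ≤ gam ν β i n := by
  unfold gam; split <;> exact le_max_right _ _

lemma gam_zero (ν β i n : ℤ) (hn : n ≤ ν - 1) : gam ν β i n = 0 := by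
  unfold gam; split <;> exact max_eq_right (by omega)

lemma gam_mono (ν β i n : ℤ) : gam ν β i (n - 1) ≤ gam ν β i n := by
  unfold gam; split <;> exact max_le_max (by omega) le_rfl

lemma sum_gam (ν β : ℤ) (hβ : 0 ≤ β) (n : ℤ) (hn : ν ≤ n) :
    ∀ j : ℤ, 0 ≤ j → ∑ k ∈ Icc 1 j, gam ν β k n = j * (n - ν) + min j β := by
  intro j hj
  obtain ⟨c, rfl⟩ : ∃ c : ℕ, j = (c : ℤ) := ⟨j.toNat, by omega⟩
  clear hj
  induction c with
  | zero =>
    push_cast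
    rw [show Finset.Icc (1:ℤ) 0 = ∅ from Finset.Icc_eq_empty (by omega)]
    simp
    omega
  | succ c ih =>
    have hins : Finset.Icc (1:ℤ) (c + 1 : ℕ) = insert ((c : ℤ) + 1) (Finset.Icc 1 (c : ℤ)) := by
      ext x; simp [Finset.mem_Icc, Finset.mem_insert]; omega
    rw [hins, Finset.sum_insert (by simp [Finset.mem_Icc]), ih]
    rcases le_or_gt ((c : ℤ) + 1) β with hc | hc
    · have hg : gam ν β ((c : ℤ) + 1) n = n - ν + 1 := by
        unfold gam; rw [if_pos hc]; exact max_eq_left (by omega)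
      have h1 : min (c : ℤ) β = c := min_eq_left (by omega)
      have h2 : min ((c : ℤ) + 1) β = (c : ℤ) + 1 := min_eq_left (by omega)
      push_cast
      rw [hg, h1, h2]; ring
    · have hg : gam ν β ((c : ℤ) + 1) n = n - ν := by
        unfold gam; rw [if_neg (by omega)]; exact max_eq_left (by omega)
      have h1 : min (c : ℤ) β = β := min_eq_right (by omega)
      have h2 : min ((c : ℤ) + 1) β = β := min_eq_right (by omega)
      push_cast
      rw [hg, h1, h2]; ring

lemma sum_gam_zero (ν β j n : ℤ) (hn : n ≤ ν - 1) :
    ∑ k ∈ Icc 1 j, gam ν β k n = 0 :=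
  Finset.sum_eq_zero fun k _ => gam_zero ν β k n hn

lemma lemF (h : ℤ → ℤ) (ν β i : ℤ) (hβ0 : 0 ≤ β) (hi1 : 1 ≤ i)
    (hzero : ∀ n ≤ ν - 1, h n = 0)
    (hA : ∀ m, ν - 1 ≤ m → h m ≤ (m - ν + 1) * dr h m)
    (hB : ∀ m, ν ≤ m → h m ≤ (m - ν) * dr h m + β)
    (n : ℤ) (h1 : 1 ≤ h (n-1) - ∑ k ∈ Finset.Icc 1 (i-1), gam ν β k (n-1)) :
    h (n-1) - ∑ k ∈ Finset.Icc 1 (i-1), gam ν β k (n-1) + 1 ≤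
      h n - ∑ k ∈ Finset.Icc 1 (i-1), gam ν β k n := by
  -- first, n - 1 ≥ ν
  by_cases hn : n - 1 ≤ ν - 1
  · rw [sum_gam_zero ν β (i-1) (n-1) hn, hzero (n-1) hn] at h1
    omega
  push_neg at hn
  have hnν : ν ≤ n - 1 := by omega
  rw [sum_gam ν β hβ0 (n-1) hnν (i-1) (by omega)] at h1 ⊢
  rw [sum_gam ν β hβ0 n (by omega) (i-1) (by omega)]
  have hdr : h n = h (n-1) + dr h n := by unfold dr; ring
  rcases le_or_gt i β with hc | hc
  · -- min (i-1) β = i-1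
    have hmin : min (i-1) β = i - 1 := min_eq_left (by omega)
    rw [hmin] at h1 ⊢
    -- from hA at n: h (n-1) ≤ (n - ν) * dr h n
    have hA' := hA n (by omega)
    have e1 : (n - ν + 1) * dr h n = (n - ν) * dr h n + dr h n := by ring
    have h2 : h (n-1) ≤ (n - ν) * dr h n := by rw [hdr] at hA'; linarith
    -- h (n-1) ≥ (i-1)*(n-ν) + 1
    have e2 : (i-1) * (n - 1 - ν) + (i - 1) = (i-1) * (n - ν) := by ring
    have h3 : (i-1) * (n - ν) + 1 ≤ h (n-1) := by linarith
    have hdrn : i ≤ dr h n := by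
      by_contra hcc
      push_neg at hcc
      have : (n - ν) * dr h n ≤ (n - ν) * (i - 1) :=
        mul_le_mul_of_nonneg_left (by omega) (by omega)
      have e3 : (n - ν) * (i - 1) = (i - 1) * (n - ν) := by ring
      linarith
    have e4 : (i-1) * (n - ν) = (i-1) * (n - 1 - ν) + (i-1) := by ring
    linarith
  · -- min (i-1) β = β
    have hmin : min (i-1) β = β := min_eq_right (by omega)
    rw [hmin] at h1 ⊢
    by_cases hn2 : n - 1 = ν
    · -- contradiction with hB at ν
      have hBν := hB (n-1) (by omega)
      have e : (n - 1 - ν) = 0 := by omega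
      rw [e] at hBν
      have e2 : (i-1) * (0:ℤ) = 0 := by ring
      rw [e, e2] at h1
      simp at hBν
      omega
    · have hn3 : ν + 1 ≤ n - 1 := by omega
      have hB' := hB n (by omega)
      have e1 : (n - ν) * dr h n = (n - 1 - ν) * dr h n + dr h n := by ring
      have h2 : h (n-1) ≤ (n - 1 - ν) * dr h n + β := by rw [hdr] at hB'; linarith
      have h3 : (i-1) * (n - 1 - ν) + 1 ≤ (n - 1 - ν) * dr h n := by linarith
      have hdrn : i ≤ dr h n := by
        by_contra hcc
        push_neg at hcc
        have : (n - 1 - ν) * dr h n ≤ (n - 1 - ν) * (i - 1) :=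
          mul_le_mul_of_nonneg_left (by omega) (by omega)
        have e3 : (n - 1 - ν) * (i - 1) = (i - 1) * (n - 1 - ν) := by ring
        linarith
      have e4 : (i-1) * (n - ν) = (i-1) * (n - 1 - ν) + (i-1) := by ring
      linarith

lemma rk_nonneg (h : ℤ → ℤ) (ν β i n : ℤ) : 0 ≤ rkOnePiece h ν β i n :=
  le_min (gam_nonneg _ _ _ _) (le_max_right _ _)

lemma keyT (h : ℤ → ℤ) (ν β i : ℤ) (hβ0 : 0 ≤ β) (hi1 : 1 ≤ i)
    (hzero : ∀ n ≤ ν - 1, h n = 0)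
    (hA : ∀ m, ν - 1 ≤ m → h m ≤ (m - ν + 1) * dr h m)
    (hB : ∀ m, ν ≤ m → h m ≤ (m - ν) * dr h m + β)
    (n : ℤ) (hp : 1 ≤ rkOnePiece h ν β i n) :
    rkOnePiece h ν β i (n - 1) ≤ rkOnePiece h ν β i n - 1 := by
  set F : ℤ → ℤ := fun m => h m - ∑ k ∈ Finset.Icc 1 (i - 1), gam ν β k m with hF
  have hg1 : 1 ≤ gam ν β i n := le_trans hp (min_le_left _ _)
  have hP1 : 1 ≤ max (F n) 0 := le_trans hp (min_le_right _ _)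
  have hF1 : 1 ≤ F n := by
    rcases le_or_gt (F n) 0 with hh | hh
    · rw [max_eq_right hh] at hP1; omega
    · omega
  have hgstep : gam ν β i (n - 1) = gam ν β i n - 1 := by
    unfold gam at hg1 ⊢
    split_ifs with hc
    · have : 1 ≤ n - ν + 1 := by
        rw [if_pos hc] at hg1
        rcases le_or_gt (n - ν + 1) 0 with hh | hh
        · rw [max_eq_right hh] at hg1; omega
        · omega
      rw [max_eq_left (by omega), max_eq_left (by omega)]; ring_nf
    · have : 1 ≤ n - ν := by
        rw [if_neg hc] at hg1
        rcases le_or_gt (n - ν) 0 with hh | hh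
        · rw [max_eq_right hh] at hg1; omega
        · omega
      rw [max_eq_left (by omega), max_eq_left (by omega)]; ring_nf
  rcases le_or_gt (gam ν β i n) (F n) with hgF | hFg
  · have hpn : rkOnePiece h ν β i n = gam ν β i n := by
      unfold rkOnePiece
      exact min_eq_left (le_trans hgF (le_max_left _ _))
    calc rkOnePiece h ν β i (n - 1) ≤ gam ν β i (n - 1) := min_le_left _ _
      _ = gam ν β i n - 1 := hgstep
      _ = rkOnePiece h ν β i n - 1 := by rw [hpn]
  · have hpn : rkOnePiece h ν β i n = F n := by
      have he : rkOnePiece h ν β i n = min (gam ν β i n) (max (F n) 0) := rfl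
      rw [he, max_eq_left (by omega)]
      exact min_eq_right (le_of_lt hFg)
    have hub : rkOnePiece h ν β i (n - 1) ≤ max (F (n - 1)) 0 := min_le_right _ _
    rw [hpn]
    rcases le_or_gt 1 (F (n - 1)) with hc | hc
    · have := lemF h ν β i hβ0 hi1 hzero hA hB n hc
      rw [max_eq_left (by omega)] at hub
      have h6 : F (n - 1) + 1 ≤ F n := this
      omega
    · rw [max_eq_right (by omega)] at hub
      omega

lemma keyM (h : ℤ → ℤ) (ν β i : ℤ) (hβ0 : 0 ≤ β) (hi1 : 1 ≤ i)
    (hzero : ∀ n ≤ ν - 1, h n = 0)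
    (hA : ∀ m, ν - 1 ≤ m → h m ≤ (m - ν + 1) * dr h m)
    (hB : ∀ m, ν ≤ m → h m ≤ (m - ν) * dr h m + β)
    (n : ℤ) : rkOnePiece h ν β i (n - 1) ≤ rkOnePiece h ν β i n := by
  rcases le_or_gt 1 (rkOnePiece h ν β i n) with hp | hp
  · have := keyT h ν β i hβ0 hi1 hzero hA hB n hp
    omega
  have hp0 := rk_nonneg h ν β i n
  have hpz : rkOnePiece h ν β i n = 0 := by omega
  have hcases : gam ν β i n ≤ 0 ∨ max (h n - ∑ k ∈ Finset.Icc 1 (i - 1), gam ν β k n) 0 ≤ 0 :=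
    min_le_iff.mp (le_of_eq hpz)
  rcases hcases with hc | hc
  · have h1 : rkOnePiece h ν β i (n - 1) ≤ gam ν β i (n - 1) := min_le_left _ _
    have h2 := gam_mono ν β i n
    have h3 := rk_nonneg h ν β i (n - 1)
    omega
  · have hFn : h n - ∑ k ∈ Finset.Icc 1 (i - 1), gam ν β k n ≤ 0 :=
      le_trans (le_max_left _ _) hc
    have hFn1 : h (n - 1) - ∑ k ∈ Finset.Icc 1 (i - 1), gam ν β k (n - 1) ≤ 0 := by
      by_contra hcc
      push_neg at hcc
      have := lemF h ν β i hβ0 hi1 hzero hA hB n (by omega)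
      omega
    have h1 : rkOnePiece h ν β i (n - 1) ≤
        max (h (n-1) - ∑ k ∈ Finset.Icc 1 (i - 1), gam ν β k (n-1)) 0 := min_le_right _ _
    rw [max_eq_right hFn1] at h1
    have h3 := rk_nonneg h ν β i (n - 1)
    omega

lemma keyLin (h : ℤ → ℤ) (ν β ρ i : ℤ) (hβ0 : 0 ≤ β) (hβρ : β < ρ)
    (hi1 : 1 ≤ i) (hi2 : i ≤ ρ) (N₁ : ℤ) (hN₁ : ∀ n ≥ N₁, h n = ρ * (n - ν) + β) :
    ∀ n ≥ max N₁ (ν + ρ), rkOnePiece h ν β i n = if i ≤ β then n - ν + 1 else n - ν := by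
  intro n hn
  have hn1 : N₁ ≤ n := le_trans (le_max_left _ _) hn
  have hn2 : ν + ρ ≤ n := le_trans (le_max_right _ _) hn
  have hρ1 : 1 ≤ ρ := by omega
  have hhn : h n = ρ * (n - ν) + β := hN₁ n hn1
  have hSn : ∑ k ∈ Finset.Icc 1 (i - 1), gam ν β k n = (i-1) * (n - ν) + min (i-1) β :=
    sum_gam ν β hβ0 n (by omega) (i-1) (by omega)
  unfold rkOnePiece
  rw [hSn, hhn]
  rcases le_or_gt i β with hc | hc
  · have hmin : min (i-1) β = i - 1 := min_eq_left (by omega)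
    rw [hmin, if_pos hc]
    have hg : gam ν β i n = n - ν + 1 := by
      unfold gam; rw [if_pos hc]; exact max_eq_left (by omega)
    rw [hg]
    have hmul : 0 ≤ (ρ - i) * (n - ν) := mul_nonneg (by omega) (by omega)
    have e : ρ * (n - ν) + β - ((i-1) * (n - ν) + (i - 1)) =
        (ρ - i) * (n - ν) + (n - ν) + β - i + 1 := by ring
    have hge : n - ν + 1 ≤ ρ * (n - ν) + β - ((i-1) * (n - ν) + (i - 1)) := by
      rw [e]; omega
    rw [max_eq_left (by omega)]
    exact min_eq_left hge
  · have hmin : min (i-1) β = β := min_eq_right (by omega)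
    rw [hmin, if_neg (by omega)]
    have hg : gam ν β i n = n - ν := by
      unfold gam; rw [if_neg (by omega)]; exact max_eq_left (by omega)
    rw [hg]
    have hmul : 0 ≤ (ρ - i) * (n - ν) := mul_nonneg (by omega) (by omega)
    have e : ρ * (n - ν) + β - ((i-1) * (n - ν) + β) =
        (ρ - i) * (n - ν) + (n - ν) := by ring
    have hge : n - ν ≤ ρ * (n - ν) + β - ((i-1) * (n - ν) + β) := by
      rw [e]; omega
    rw [max_eq_left (by omega)]
    exact min_eq_left hge

section Derive
variable (h ht : ℤ → ℤ) (t : ℤ → WithTop ℤ)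

theorem derive_ABz (hF : IsFDH h) (hTF : TorsionFree h) (hT : TildeSpec h ht)
    (ht' : TSpec h ht t) (htwo : TwoValues t)
    (ρ ν β : ℤ) (hβ0 : 0 ≤ β) (hβρ : β < ρ)
    (hlin : ∃ N : ℤ, ∀ n ≥ N, h n = ρ * (n - ν) + β) :
    (∀ n ≤ ν - 1, h n = 0) ∧
    (∀ m, ν - 1 ≤ m → h m ≤ (m - ν + 1) * dr h m) ∧
    (∀ m, ν ≤ m → h m ≤ (m - ν) * dr h m + β) := by
  obtain ⟨hpos, hrpos, ⟨N₀, hN₀⟩, -⟩ := hF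
  obtain ⟨N₁, hN₁⟩ := hlin
  have hρ1 : 1 ≤ ρ := by omega
  have hmono : ∀ m n : ℤ, m ≤ n → h m ≤ h n := by
    intro m n hmn
    obtain ⟨k, rfl⟩ : ∃ k : ℕ, n = m + k := ⟨(n - m).toNat, by omega⟩
    clear hmn
    induction k with
    | zero => simp
    | succ k ih =>
      have := hrpos (m + (k + 1 : ℕ))
      unfold dr at this
      have e : (m + (k + 1 : ℕ)) - 1 = m + (k : ℕ) := by push_cast; ring
      rw [e] at this
      omega
  have hdrlin : ∀ n, N₁ + 1 ≤ n → dr h n = ρ := by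
    intro n hn
    unfold dr
    rw [hN₁ n (by omega), hN₁ (n - 1) (by omega)]
    ring
  have htub : ∀ n m : ℤ, n ≤ m → h m + (n - m) * dr h m ≤ ht n :=
    fun n m hm => (hT n).2 ⟨m, hm, rfl⟩
  have hhle : ∀ n, h n ≤ ht n := by
    intro n
    have := htub n n le_rfl
    simpa using this
  -- value of ht n when t n = ⊤
  have httop : ∀ n, t n = ⊤ → ht n = ρ * (n - ν) + β := by
    intro n hn
    obtain ⟨m, hm1, hm2, hm3⟩ := (ht' n).2.2 hn (max n (N₁ + 1))
    have hm4 : N₁ + 1 ≤ m := le_trans (le_max_right _ _) hm1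
    rw [hN₁ m (by omega), hdrlin m hm4] at hm3
    rw [hm3]; ring
  -- t n = ⊤ for n large
  have htopbig : ∀ n, N₁ + 1 ≤ n → t n = ⊤ := by
    intro n hn
    have hval : ∀ m, n ≤ m → ht n = h m + (n - m) * dr h m := by
      intro m hm
      obtain ⟨m₀, hm₀, he⟩ := (hT n).1
      rw [hN₁ m₀ (by omega), hdrlin m₀ (by omega)] at he
      rw [hN₁ m (by omega), hdrlin m (by omega), he]
      ring
    cases htn : t n with
    | top => rfl
    | coe τ =>
      have h1 := (ht' n).1 (max n (τ + 1)) (le_max_left _ _) (hval _ (le_max_left _ _))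
      rw [htn] at h1
      have h2 : (max n (τ + 1) : ℤ) ≤ τ := WithTop.coe_le_coe.mp h1
      have h3 := le_max_right n (τ + 1)
      omega
  -- extract the finite value τ
  obtain ⟨v, w, hvw, -, -, hall⟩ := htwo
  have hτex : ∃ τ : ℤ, ∀ n : ℤ, t n = ⊤ ∨ t n = (τ : ℤ) := by
    have hTop := htopbig (N₁ + 1) le_rfl
    rcases hall (N₁ + 1) with h1 | h1
    · -- v = ⊤
      have hv : v = ⊤ := by rw [← h1, hTop]
      cases hw : w with
      | top => exact absurd (hv.trans hw.symm) hvw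
      | coe τ =>
        refine ⟨τ, fun n => ?_⟩
        rcases hall n with h2 | h2
        · exact Or.inl (by rw [h2, hv])
        · exact Or.inr (by rw [h2, hw])
    · have hw : w = ⊤ := by rw [← h1, hTop]
      cases hv : v with
      | top => exact absurd (hv.trans hw.symm) hvw
      | coe τ =>
        refine ⟨τ, fun n => ?_⟩
        rcases hall n with h2 | h2
        · exact Or.inr (by rw [h2, hv])
        · exact Or.inl (by rw [h2, hw])
  obtain ⟨τ, hτall⟩ := hτex
  -- for n ≤ ν - 1, t n ≠ ⊤
  have hkey : ∀ n, n ≤ ν - 1 → t n = (τ : ℤ) := by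
    intro n hn
    rcases hτall n with h1 | h1
    · exfalso
      have h2 := httop n h1
      have h3 : 0 ≤ ht n := le_trans (hpos n) (hhle n)
      have h4 : ρ * (n - ν) ≤ ρ * (-1) := mul_le_mul_of_nonneg_left (by omega) (by omega)
      omega
    · exact h1
  have hdrτ : dr h τ = 0 := by
    by_contra hc
    have hdr1 : 1 ≤ dr h τ := by have := hrpos τ; omega
    set n := min (ν - 1) (τ - h τ - 1) with hn
    have h1 := hkey n (by omega)
    obtain ⟨hnτ, he⟩ := (ht' n).2.1 τ h1
    have h2 : 0 ≤ ht n := le_trans (hpos n) (hhle n)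
    rw [he] at h2
    have h3 : n - τ ≤ 0 := by omega
    have h4 : (n - τ) * dr h τ ≤ (n - τ) * 1 := mul_le_mul_of_nonpos_left (by omega) h3
    have h5 : 0 ≤ h τ := hpos τ
    have h6 : n ≤ τ - h τ - 1 := min_le_right _ _
    omega
  have hhτ : h τ = 0 := by
    by_contra hc
    have h1 : 0 < h τ := lt_of_le_of_ne (hpos τ) (Ne.symm hc)
    have h0 : h (min N₀ τ) = 0 := hN₀ _ (min_le_left _ _)
    have hlt : h (min N₀ τ) < h τ := by omega
    obtain ⟨m, hm1, hm2, hm3⟩ := jump_of_lt h (min N₀ τ) τ (min_le_right _ _) hlt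
    have := hTF m τ hm2 hm3
    omega
  have htν1 : ht (ν - 1) = 0 := by
    obtain ⟨-, he⟩ := (ht' (ν - 1)).2.1 τ (hkey (ν - 1) le_rfl)
    rw [he, hdrτ, hhτ]; ring
  have htν : ht ν ≤ β := by
    rcases hτall ν with h1 | h1
    · rw [httop ν h1]
      have : ν - ν = 0 := by ring
      rw [this, mul_zero, zero_add]
    · obtain ⟨-, he⟩ := (ht' ν).2.1 τ h1
      rw [he, hdrτ, hhτ]
      simpa using hβ0
  have hzero : ∀ n ≤ ν - 1, h n = 0 := by
    intro n hn
    have h1 : h (ν - 1) ≤ 0 := htν1 ▸ hhle (ν - 1)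
    have h2 := hmono n (ν - 1) hn
    have h3 := hpos n
    omega
  refine ⟨hzero, ?_, ?_⟩
  · intro m hm
    have h1 := (hT (ν - 1)).2 ⟨m, hm, rfl⟩
    rw [htν1] at h1
    have e : (m - ν + 1) * dr h m = -((ν - 1 - m) * dr h m) := by ring
    linarith
  · intro m hm
    have h1 := (hT ν).2 ⟨m, hm, rfl⟩
    have h2 := le_trans h1 htν
    have e : (m - ν) * dr h m = -((ν - m) * dr h m) := by ring
    linarith

end Derive

/-- each rank-one piece h^i is a torsion-free FDH function of rank 1
and degree -nu (for i <= beta) or -nu - 1 (for i > beta). -/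
theorem pieces_rank_one (h ht : ℤ → ℤ) (t : ℤ → WithTop ℤ)
    (hF : IsFDH h) (hTF : TorsionFree h) (hT : TildeSpec h ht) (ht' : TSpec h ht t)
    (htwo : TwoValues t)
    (ρ ν β : ℤ) (hβ0 : 0 ≤ β) (hβρ : β < ρ)
    (hlin : ∃ N : ℤ, ∀ n ≥ N, h n = ρ * (n - ν) + β) :
    ∀ i : ℤ, 1 ≤ i → i ≤ ρ →
      IsFDH (rkOnePiece h ν β i) ∧
      (∀ n : ℤ, 0 < rkOnePiece h ν β i n →
        1 ≤ rkOnePiece h ν β i n - rkOnePiece h ν β i (n - 1)) ∧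
      (∃ N : ℤ, ∀ n ≥ N, rkOnePiece h ν β i n =
        if i ≤ β then n - ν + 1 else n - ν) := by
  intro i hi1 hi2
  obtain ⟨hzero, hA, hB⟩ := derive_ABz h ht t hF hTF hT ht' htwo ρ ν β hβ0 hβρ hlin
  obtain ⟨N₁, hN₁⟩ := hlin
  have hTT := keyT h ν β i hβ0 hi1 hzero hA hB
  have hMM := keyM h ν β i hβ0 hi1 hzero hA hB
  have hLin := keyLin h ν β ρ i hβ0 hβρ hi1 hi2 N₁ hN₁
  refine ⟨⟨fun n => rk_nonneg h ν β i n, ?_, ⟨ν - 1, ?_⟩,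
      ⟨1, (if i ≤ β then 1 - ν else -ν), by norm_num, max N₁ (ν + ρ), ?_⟩⟩,
    ?_, ⟨max N₁ (ν + ρ), hLin⟩⟩
  · intro n
    unfold dr
    linarith [hMM n]
  · intro n hn
    have h1 : rkOnePiece h ν β i n ≤ gam ν β i n := min_le_left _ _
    have h2 := gam_zero ν β i n hn
    have h3 := rk_nonneg h ν β i n
    omega
  · intro n hn
    rw [hLin n hn]
    split_ifs <;> ring
  · intro n hp
    have := hTT n (by omega)
    omega
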